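/- Let (aᵢ) be a sequence in ℝ² such that for every choice of signs εᵢ ∈ {1,-1} the series ∑ εᵢ aᵢ diverges. Then ‖aᵢ‖ does not tend to 0. -/

import Mathlib

open Finset
abbrev E2 := EuclideanSpace ℝ (Fin 2)

lemma dep3 (w : Fin 3 → E2) : ∃ g : Fin 3 → ℝ, (∑ j, g j • w j) = 0 ∧ ∃ j, g j ≠ 0 := by
  have hni : ¬ LinearIndependent ℝ w := by
    intro hli
    have h1 := hli.fintype_card_le_finrank
    simp [finrank_euclideanSpace_fin] at h1
  rw [Fintype.not_linearIndependent_iff] at hni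
  obtain ⟨g, hg, j, hj⟩ := hni
  exact ⟨g, hg, j, hj⟩


lemma move (α g : Fin 3 → ℝ) (hα : ∀ j, |α j| ≤ 1) (hg : ∃ j, g j ≠ 0) :
    ∃ t : ℝ, (∀ j, |α j + t * g j| ≤ 1) ∧ ∃ j, g j ≠ 0 ∧ (α j + t * g j = 1 ∨ α j + t * g j = -1) := by
  classical
  set s : Finset (Fin 3) := Finset.univ.filter (fun j => g j ≠ 0) with hs
  have hne : s.Nonempty := by obtain ⟨j, hj⟩ := hg; exact ⟨j, by simp [hs, hj]⟩
  set tf : Fin 3 → ℝ := fun j => if 0 < g j then (1 - α j) / g j else (-1 - α j) / g j with htf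
  set t := s.inf' hne tf with ht
  have htfval : ∀ j, tf j = if 0 < g j then (1 - α j) / g j else (-1 - α j) / g j := fun j => rfl
  have htf_nonneg : ∀ j ∈ s, 0 ≤ tf j := by
    intro j hj
    have h1 := abs_le.1 (hα j)
    have hgne : g j ≠ 0 := by simpa [hs] using hj
    rw [htfval]
    split_ifs with hp
    · exact div_nonneg (by linarith) hp.le
    · have hn : g j < 0 := lt_of_le_of_ne (not_lt.1 hp) hgne
      exact div_nonneg_of_nonpos (by linarith) hn.le
  have ht0 : 0 ≤ t := Finset.le_inf' hne _ htf_nonneg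
  have htle : ∀ j ∈ s, t ≤ tf j := fun j hj => Finset.inf'_le _ hj
  obtain ⟨j₀, hj₀s, hj₀⟩ := Finset.exists_mem_eq_inf' hne tf
  have hgj₀ : g j₀ ≠ 0 := by simpa [hs] using hj₀s
  refine ⟨t, ?_, j₀, hgj₀, ?_⟩
  · intro j
    have h1 := abs_le.1 (hα j)
    rw [abs_le]
    by_cases hz : g j = 0
    · simp only [hz, mul_zero, add_zero]; exact ⟨h1.1, h1.2⟩
    · have hjs : j ∈ s := by simp [hs, hz]
      have h2 := htle j hjs
      rw [htfval] at h2
      by_cases hp : 0 < g j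
      · rw [if_pos hp] at h2
        have h3 : t * g j ≤ 1 - α j := by
          calc t * g j ≤ ((1 - α j)/ g j) * g j := mul_le_mul_of_nonneg_right h2 hp.le
          _ = 1 - α j := by field_simp
        have h4 : 0 ≤ t * g j := mul_nonneg ht0 hp.le
        constructor <;> linarith
      · have hn : g j < 0 := lt_of_le_of_ne (not_lt.1 hp) hz
        rw [if_neg hp] at h2
        have h3 : -1 - α j ≤ t * g j := by
          calc (-1 - α j) = ((-1 - α j)/ g j) * g j := by field_simp
          _ ≤ t * g j := mul_le_mul_of_nonpos_right h2 hn.le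
        have h4 : t * g j ≤ 0 := mul_nonpos_of_nonneg_of_nonpos ht0 hn.le
        constructor <;> linarith
  · have htval : t = tf j₀ := by rw [ht, hj₀]
    rw [htfval] at htval
    by_cases hp : 0 < g j₀
    · left
      rw [if_pos hp] at htval
      rw [htval]; field_simp; ring
    · right
      have hn : g j₀ < 0 := lt_of_le_of_ne (not_lt.1 hp) hgj₀
      rw [if_neg hp] at htval
      rw [htval]; field_simp; ring

noncomputable def Flt (α : ℕ → ℝ) (k : ℕ) : Finset ℕ := (range k).filter (fun i => α i ≠ 1 ∧ α i ≠ -1)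

lemma bg_step (v : ℕ → E2) (k : ℕ) (α : ℕ → ℝ) (h1 : ∀ i, |α i| ≤ 1)
    (h2 : ∑ i ∈ range k, α i • v i = 0)
    (h3 : (Flt α k).card ≤ 2) (h5 : ∀ i, k ≤ i → α i = 0) :
    ∃ α' : ℕ → ℝ, (∀ i, |α' i| ≤ 1) ∧ (∑ i ∈ range (k+1), α' i • v i = 0) ∧
      (Flt α' (k+1)).card ≤ 2 ∧ (∀ i, (α i = 1 ∨ α i = -1) → α' i = α i) ∧
      (∀ i, k+1 ≤ i → α' i = 0) := by
  classical
  have hαk : α k = 0 := h5 k le_rfl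
  have hsum1 : ∑ i ∈ range (k+1), α i • v i = 0 := by
    rw [Finset.sum_range_succ, hαk, h2]; simp
  by_cases hc : (Flt α (k+1)).card ≤ 2
  · exact ⟨α, h1, hsum1, hc, fun i _ => rfl, fun i hi => h5 i (by omega)⟩
  · have hsub : Flt α (k+1) ⊆ insert k (Flt α k) := by
      intro i hi
      simp only [Flt, mem_filter, mem_range] at hi
      rcases Nat.lt_succ_iff_lt_or_eq.1 hi.1 with h|h
      · exact Finset.mem_insert_of_mem (by simp [Flt, mem_filter, mem_range, h, hi.2])
      · simp [h]
    have hcard3 : (Flt α (k+1)).card = 3 := by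
      have := Finset.card_le_card hsub
      have := Finset.card_insert_le k (Flt α k)
      omega
    obtain ⟨x, y, z, hxy, hxz, hyz, hF⟩ := Finset.card_eq_three.1 hcard3
    have hmem : ∀ i ∈ Flt α (k+1), i < k + 1 ∧ α i ≠ 1 ∧ α i ≠ -1 := by
      intro i hi; simp only [Flt, mem_filter, mem_range] at hi; exact ⟨hi.1, hi.2⟩
    have hx : x < k+1 ∧ α x ≠ 1 ∧ α x ≠ -1 := hmem x (by rw [hF]; simp)
    have hy : y < k+1 ∧ α y ≠ 1 ∧ α y ≠ -1 := hmem y (by rw [hF]; simp)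
    have hz : z < k+1 ∧ α z ≠ 1 ∧ α z ≠ -1 := hmem z (by rw [hF]; simp)
    obtain ⟨g, hg0, hgne⟩ := dep3 ![v x, v y, v z]
    obtain ⟨t, htb, j₁, hj₁ne, hj₁⟩ := move ![α x, α y, α z] g
      (by intro j; fin_cases j <;> simp [h1]) hgne
    set c : ℕ → ℝ := fun i => if i = x then g 0 else if i = y then g 1 else if i = z then g 2 else 0 with hc'
    set α' : ℕ → ℝ := fun i => α i + t * c i with hα'
    have hcx : c x = g 0 := by simp [hc']
    have hcy : c y = g 1 := by simp [hc', hxy.symm]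
    have hcz : c z = g 2 := by simp [hc', hxz.symm, hyz.symm]
    have hcother : ∀ i, i ≠ x → i ≠ y → i ≠ z → c i = 0 := by
      intro i h1 h2 h3; simp [hc', h1, h2, h3]
    have hval : ∀ i, α' i = α i + t * c i := fun i => rfl
    -- values at x y z match move's α
    have hvx : α' x = α x + t * g 0 := by rw [hval, hcx]
    have hvy : α' y = α y + t * g 1 := by rw [hval, hcy]
    have hvz : α' z = α z + t * g 2 := by rw [hval, hcz]
    have hbound : ∀ i, |α' i| ≤ 1 := by
      intro i
      by_cases hix : i = x
      · rw [hix, hvx]; simpa using htb 0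
      by_cases hiy : i = y
      · rw [hiy, hvy]; simpa using htb 1
      by_cases hiz : i = z
      · rw [hiz, hvz]; simpa using htb 2
      · rw [hval, hcother i hix hiy hiz]; simpa using h1 i
    have hpres : ∀ i, (α i = 1 ∨ α i = -1) → α' i = α i := by
      intro i hfix
      have hix : i ≠ x := by rintro rfl; rcases hfix with h|h <;> [exact hx.2.1 h; exact hx.2.2 h]
      have hiy : i ≠ y := by rintro rfl; rcases hfix with h|h <;> [exact hy.2.1 h; exact hy.2.2 h]
      have hiz : i ≠ z := by rintro rfl; rcases hfix with h|h <;> [exact hz.2.1 h; exact hz.2.2 h]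
      rw [hval, hcother i hix hiy hiz]; ring
    have hz5 : ∀ i, k+1 ≤ i → α' i = 0 := by
      intro i hi
      have hix : i ≠ x := by omega
      have hiy : i ≠ y := by omega
      have hiz : i ≠ z := by omega
      rw [hval, hcother i hix hiy hiz, h5 i (by omega)]; ring
    have hxyzsub : ({x, y, z} : Finset ℕ) ⊆ range (k+1) := by
      intro i hi
      simp only [mem_insert, mem_singleton] at hi
      rcases hi with rfl|rfl|rfl <;> simp [mem_range] <;> omega
    have hsum' : ∑ i ∈ range (k+1), α' i • v i = 0 := by
      have hsplit : ∑ i ∈ range (k+1), α' i • v i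
          = ∑ i ∈ range (k+1), α i • v i + t • ∑ i ∈ range (k+1), c i • v i := by
        rw [Finset.smul_sum, ← Finset.sum_add_distrib]
        refine Finset.sum_congr rfl (fun i _ => ?_)
        rw [hval, add_smul, smul_smul]
      have hcsum : ∑ i ∈ range (k+1), c i • v i = 0 := by
        rw [← Finset.sum_subset hxyzsub (fun i _ hni => ?_)]
        · have h1 : x ∉ ({y, z} : Finset ℕ) := by simp [hxy, hxz]
          have h2 : y ∉ ({z} : Finset ℕ) := by simp [hyz]
          rw [show ({x, y, z} : Finset ℕ) = insert x (insert y {z}) from rfl,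
            Finset.sum_insert h1, Finset.sum_insert h2, Finset.sum_singleton,
            hcx, hcy, hcz]
          have h9 : g 0 • v x + g 1 • v y + g 2 • v z = 0 := by
            have := hg0
            rw [Fin.sum_univ_three] at this
            simpa using this
          rw [← add_assoc]
          exact h9
        · have hix : i ≠ x := by intro h; exact hni (by simp [h])
          have hiy : i ≠ y := by intro h; exact hni (by simp [h])
          have hiz : i ≠ z := by intro h; exact hni (by simp [h])
          rw [hcother i hix hiy hiz, zero_smul]
      rw [hsplit, hsum1, hcsum, smul_zero, add_zero]
    have hwset : ∃ u, u ∈ ({x, y, z} : Finset ℕ) ∧ (α' u = 1 ∨ α' u = -1) := by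
      fin_cases j₁ <;> simp at hj₁
      · exact ⟨x, by simp, by rw [hvx]; exact hj₁⟩
      · exact ⟨y, by simp, by rw [hvy]; exact hj₁⟩
      · exact ⟨z, by simp, by rw [hvz]; exact hj₁⟩
    obtain ⟨w, hwmem, hwfix⟩ := hwset
    have hsubF : Flt α' (k+1) ⊆ ({x, y, z} : Finset ℕ).erase w := by
      intro i hi
      simp only [Flt, mem_filter, mem_range] at hi
      have hα_not : α i ≠ 1 ∧ α i ≠ -1 := by
        constructor <;> intro hcon
        · exact hi.2.1 (by rw [hpres i (Or.inl hcon)]; exact hcon)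
        · exact hi.2.2 (by rw [hpres i (Or.inr hcon)]; exact hcon)
      have hiF : i ∈ ({x, y, z} : Finset ℕ) := by
        rw [← hF]
        simp only [Flt, mem_filter, mem_range]
        exact ⟨hi.1, hα_not⟩
      refine Finset.mem_erase.2 ⟨?_, hiF⟩
      rintro rfl
      rcases hwfix with h|h
      · exact hi.2.1 h
      · exact hi.2.2 h
    have hc3 : ({x, y, z} : Finset ℕ).card = 3 := by rw [← hF]; exact hcard3
    have hcard' : (Flt α' (k+1)).card ≤ 2 := by
      have h1 := Finset.card_le_card hsubF
      rw [Finset.card_erase_of_mem hwmem, hc3] at h1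
      omega
    exact ⟨α', hbound, hsum', hcard', hpres, hz5⟩

def BGP (v : ℕ → E2) (k : ℕ) (α : ℕ → ℝ) : Prop :=
  (∀ i, |α i| ≤ 1) ∧ (∑ i ∈ range k, α i • v i = 0) ∧ (Flt α k).card ≤ 2 ∧ (∀ i, k ≤ i → α i = 0)

lemma bg_step' (v : ℕ → E2) (k : ℕ) (α : ℕ → ℝ) (h : BGP v k α) :
    ∃ α', BGP v (k+1) α' ∧ ∀ i, (α i = 1 ∨ α i = -1) → α' i = α i := by
  obtain ⟨h1, h2, h3, h5⟩ := h
  obtain ⟨α', c1, c2, c3, c4, c5⟩ := bg_step v k α h1 h2 h3 h5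
  exact ⟨α', ⟨c1, c2, c3, c5⟩, c4⟩

noncomputable def tower (v : ℕ → E2) : (k : ℕ) → {α : ℕ → ℝ // BGP v k α}
  | 0 => ⟨fun _ => 0, ⟨by simp, by simp, by simp [Flt], fun i _ => rfl⟩⟩
  | (k+1) => ⟨(bg_step' v k (tower v k).1 (tower v k).2).choose,
             ((bg_step' v k (tower v k).1 (tower v k).2).choose_spec).1⟩

lemma tower_pers (v : ℕ → E2) (k : ℕ) :
    ∀ i, ((tower v k).1 i = 1 ∨ (tower v k).1 i = -1) → (tower v (k+1)).1 i = (tower v k).1 i := by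
  have h := ((bg_step' v k (tower v k).1 (tower v k).2).choose_spec).2
  intro i hf
  exact h i hf

lemma tower_pers_le (v : ℕ → E2) {k m : ℕ} (h : k ≤ m) :
    ∀ i, ((tower v k).1 i = 1 ∨ (tower v k).1 i = -1) → (tower v m).1 i = (tower v k).1 i := by
  induction m, h using Nat.le_induction with
  | base => intro i _; rfl
  | succ m hm ih =>
    intro i hf
    have h1 := ih i hf
    have h2 : (tower v m).1 i = 1 ∨ (tower v m).1 i = -1 := by rw [h1]; exact hf
    rw [tower_pers v m i h2, h1]

lemma bg (v : ℕ → E2) (δ : ℝ) (n : ℕ) (hδ : 0 ≤ δ) (hv : ∀ i, ‖v i‖ ≤ δ) :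
    ∃ ε : ℕ → ℝ, (∀ i, ε i = 1 ∨ ε i = -1) ∧
      ∀ k ≤ n, ‖∑ i ∈ range k, ε i • v i‖ ≤ 4 * δ := by
  classical
  set A : ℕ → ℝ := (tower v n).1 with hA
  set ε : ℕ → ℝ := fun i => if A i = -1 then -1 else 1 with hε
  have hεval : ∀ i, ε i = if A i = -1 then -1 else 1 := fun i => rfl
  refine ⟨ε, fun i => by rw [hεval]; split_ifs <;> simp, ?_⟩
  intro k hk
  set α : ℕ → ℝ := (tower v k).1 with hα
  obtain ⟨p1, p2, p3, p4⟩ := (tower v k).2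
  have hfix : ∀ i, (α i = 1 ∨ α i = -1) → ε i = α i := by
    intro i hf
    have hAi : A i = α i := tower_pers_le v hk i hf
    rw [hεval, hAi]
    rcases hf with h|h <;> rw [h] <;> norm_num
  have hsum_eq : ∑ i ∈ range k, ε i • v i = ∑ i ∈ range k, (ε i - α i) • v i := by
    rw [← sub_zero (∑ i ∈ range k, ε i • v i), ← p2, ← Finset.sum_sub_distrib]
    exact Finset.sum_congr rfl (fun i _ => by rw [sub_smul])
  have hsupp : ∑ i ∈ range k, (ε i - α i) • v i = ∑ i ∈ Flt α k, (ε i - α i) • v i := by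
    refine (Finset.sum_subset ?_ ?_).symm
    · exact Finset.filter_subset _ _
    · intro i hir hiF
      simp only [Flt, mem_filter, mem_range, not_and] at hiF
      have : α i = 1 ∨ α i = -1 := by
        by_cases h1 : α i = 1
        · exact Or.inl h1
        · by_cases h2 : α i = -1
          · exact Or.inr h2
          · exact absurd h2 (by have := hiF (mem_range.1 hir) h1; tauto)
      rw [hfix i this, sub_self, zero_smul]
  have hterm : ∀ i ∈ Flt α k, ‖(ε i - α i) • v i‖ ≤ 2 * δ := by
    intro i _
    rw [norm_smul]
    have h1 : |ε i - α i| ≤ 2 := by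
      have h2 : |ε i| ≤ 1 := by rw [hεval]; split_ifs <;> norm_num
      have h3 := p1 i
      calc |ε i - α i| ≤ |ε i| + |α i| := abs_sub _ _
        _ ≤ 2 := by linarith
    rw [Real.norm_eq_abs]
    exact mul_le_mul h1 (hv i) (norm_nonneg _) (by norm_num)
  calc ‖∑ i ∈ range k, ε i • v i‖ = ‖∑ i ∈ Flt α k, (ε i - α i) • v i‖ := by
        rw [hsum_eq, hsupp]
    _ ≤ ∑ i ∈ Flt α k, ‖(ε i - α i) • v i‖ := norm_sum_le _ _
    _ ≤ (Flt α k).card • (2 * δ) := Finset.sum_le_card_nsmul _ _ _ hterm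
    _ = ((Flt α k).card : ℝ) * (2 * δ) := by rw [nsmul_eq_mul]
    _ ≤ 2 * (2 * δ) := by
        apply mul_le_mul_of_nonneg_right _ (by linarith)
        exact_mod_cast p3
    _ = 4 * δ := by ring

open Filter

theorem stmt7 (a : ℕ → EuclideanSpace ℝ (Fin 2))
    (h : ∀ ε : ℕ → ℝ, (∀ i, ε i = 1 ∨ ε i = -1) →
      ¬ ∃ l, Tendsto (fun N => ∑ i ∈ Finset.range N, ε i • a i) atTop (nhds l)) :
    ¬ Tendsto (fun n => ‖a n‖) atTop (nhds 0) := by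
  classical
  intro htend
  have hM : ∀ k : ℕ, ∃ N, ∀ i ≥ N, ‖a i‖ ≤ (1/2 : ℝ)^k := by
    intro k
    have hpos : (0:ℝ) < (1/2:ℝ)^k := by positivity
    obtain ⟨N, hN⟩ := (Metric.tendsto_atTop.1 htend) ((1/2:ℝ)^k) hpos
    refine ⟨N, fun i hi => ?_⟩
    have := hN i hi
    rw [Real.dist_eq, sub_zero, abs_of_nonneg (norm_nonneg _)] at this
    linarith
  choose M hMs using hM
  set Nf : ℕ → ℕ := fun k => Nat.rec (M 0) (fun k ih => max (ih + 1) (M (k+1))) k with hNf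
  have hNf0 : Nf 0 = M 0 := rfl
  have hNfs : ∀ k, Nf (k+1) = max (Nf k + 1) (M (k+1)) := fun k => rfl
  have hNfmono : StrictMono Nf := by
    apply strictMono_nat_of_lt_succ
    intro k
    rw [hNfs]
    omega
  have hNfM : ∀ k, M k ≤ Nf k := by
    intro k
    cases k with
    | zero => rw [hNf0]
    | succ k => rw [hNfs]; omega
  have hblk_norm : ∀ k i, Nf k ≤ i → ‖a i‖ ≤ (1/2:ℝ)^k := by
    intro k i hi
    exact hMs k i (le_trans (hNfM k) hi)
  have hbg : ∀ k : ℕ, ∃ ε : ℕ → ℝ, (∀ i, ε i = 1 ∨ ε i = -1) ∧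
      ∀ m ≤ Nf (k+1) - Nf k, ‖∑ j ∈ Finset.range m, ε j • a (Nf k + j)‖ ≤ 4 * (1/2:ℝ)^k := by
    intro k
    exact bg (fun j => a (Nf k + j)) ((1/2:ℝ)^k) (Nf (k+1) - Nf k) (by positivity)
      (fun j => hblk_norm k (Nf k + j) (Nat.le_add_right _ _))
  choose εblk hsign hpart using hbg
  set blk : ℕ → ℕ := fun i => Nat.findGreatest (fun j => Nf j ≤ i) i with hblk
  set ε : ℕ → ℝ := fun i => if Nf 0 ≤ i then εblk (blk i) (i - Nf (blk i)) else 1 with hε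
  have hεval : ∀ i, ε i = if Nf 0 ≤ i then εblk (blk i) (i - Nf (blk i)) else 1 := fun i => rfl
  have hεsign : ∀ i, ε i = 1 ∨ ε i = -1 := by
    intro i
    rw [hεval]
    split_ifs with hi
    · exact hsign _ _
    · left; rfl
  have hblk_eq : ∀ k i, Nf k ≤ i → i < Nf (k+1) → blk i = k := by
    intro k i h1 h2
    rw [hblk]
    rw [Nat.findGreatest_eq_iff]
    refine ⟨le_trans (hNfmono.le_apply) h1, fun _ => h1, ?_⟩
    intro n hn hni hP
    have : Nf (k+1) ≤ Nf n := hNfmono.monotone hn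
    omega
  have hεblk : ∀ k i, Nf k ≤ i → i < Nf (k+1) → ε i = εblk k (i - Nf k) := by
    intro k i h1 h2
    have h0 : Nf 0 ≤ i := le_trans (hNfmono.monotone (Nat.zero_le k)) h1
    rw [hεval, if_pos h0, hblk_eq k i h1 h2]
  set S : ℕ → EuclideanSpace ℝ (Fin 2) := fun m => ∑ i ∈ Finset.range m, ε i • a i with hS
  have hblock_bound : ∀ k m, Nf k ≤ m → m ≤ Nf (k+1) → ‖S m - S (Nf k)‖ ≤ 4 * (1/2:ℝ)^k := by
    intro k m h1 h2
    have hdiff : S m - S (Nf k) = ∑ i ∈ Finset.Ico (Nf k) m, ε i • a i := by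
      rw [hS]
      rw [← Finset.sum_Ico_eq_sub _ h1]
    have hre : ∑ i ∈ Finset.Ico (Nf k) m, ε i • a i
        = ∑ j ∈ Finset.range (m - Nf k), εblk k j • a (Nf k + j) := by
      rw [Finset.sum_Ico_eq_sum_range]
      refine Finset.sum_congr rfl (fun j hj => ?_)
      rw [Finset.mem_range] at hj
      have hji : Nf k + j < Nf (k+1) := by omega
      rw [hεblk k (Nf k + j) (Nat.le_add_right _ _) hji, Nat.add_sub_cancel_left]
    rw [hdiff, hre]
    exact hpart k (m - Nf k) (by omega)
  have hcauchy : CauchySeq (fun k => S (Nf k)) := by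
    apply cauchySeq_of_le_geometric (1/2 : ℝ) 8 (by norm_num)
    intro k
    rw [dist_eq_norm, norm_sub_rev]
    calc ‖S (Nf (k+1)) - S (Nf k)‖ ≤ 4 * (1/2:ℝ)^k :=
          hblock_bound k (Nf (k+1)) (hNfmono.monotone (Nat.le_succ k)) le_rfl
      _ ≤ 8 * (1/2:ℝ)^k := by
          have : (0:ℝ) ≤ (1/2:ℝ)^k := by positivity
          linarith
  obtain ⟨l, hl⟩ := cauchySeq_tendsto_of_complete hcauchy
  refine h ε hεsign ⟨l, ?_⟩
  rw [Metric.tendsto_atTop]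
  intro η hη
  have hgeo : Tendsto (fun k : ℕ => 4 * (1/2:ℝ)^k) atTop (nhds 0) := by
    have h0 := tendsto_pow_atTop_nhds_zero_of_lt_one (by norm_num : (0:ℝ) ≤ 1/2) (by norm_num : (1/2:ℝ) < 1)
    have h1 := h0.const_mul (4:ℝ)
    simpa using h1
  obtain ⟨K₁, hK₁⟩ := (Metric.tendsto_atTop.1 hgeo) (η/2) (by linarith)
  obtain ⟨K₂, hK₂⟩ := (Metric.tendsto_atTop.1 hl) (η/2) (by linarith)
  set k₀ := max K₁ K₂ with hk₀
  refine ⟨Nf k₀, fun m hm => ?_⟩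
  set k := blk m with hk
  have hk₀m : k₀ ≤ m := le_trans hNfmono.le_apply hm
  have hkk₀ : k₀ ≤ k := Nat.le_findGreatest (P := fun j => Nf j ≤ m) hk₀m hm
  have hNfkm : Nf k ≤ m := Nat.findGreatest_spec (P := fun j => Nf j ≤ m) hk₀m hm
  have hmNfk1 : m < Nf (k+1) := by
    by_cases hc : k + 1 ≤ m
    · by_contra hcon
      push_neg at hcon
      have hgr := Nat.findGreatest_is_greatest (lt_add_one k) hc
      exact hgr hcon
    · have hlt : m < k + 1 := by omega
      calc m < k + 1 := hlt
        _ ≤ Nf (k+1) := hNfmono.le_apply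
  have hd1 : dist (S m) (S (Nf k)) ≤ 4 * (1/2:ℝ)^k := by
    rw [dist_eq_norm]
    exact hblock_bound k m hNfkm hmNfk1.le
  have hd2 : dist (S (Nf k)) l < η/2 := hK₂ k (le_trans (le_max_right _ _) hkk₀)
  have hd3 : 4 * (1/2:ℝ)^k < η/2 := by
    have hh := hK₁ k (le_trans (le_max_left _ _) hkk₀)
    rw [Real.dist_eq, sub_zero] at hh
    have h4 : (0:ℝ) ≤ 4 * (1/2:ℝ)^k := by positivity
    rw [abs_of_nonneg h4] at hh
    exact hh
  calc dist (S m) l ≤ dist (S m) (S (Nf k)) + dist (S (Nf k)) l := dist_triangle _ _ _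
    _ < 4 * (1/2:ℝ)^k + η/2 := by linarith
    _ < η := by linarith
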